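/- There is no morphism f on finite words over {1,2,3} with f(w) = w (w the Arshon sequence), |f(1)| + |f(2)| + |f(3)| > 3, and |f(1)| = 4. -/

import Mathlib

open List Filter

/-- Image of a letter in an odd (1-based) position under ψ. -/
def oddBlock : ℕ → List ℕ
  | 1 => [1, 2, 3]
  | 2 => [2, 3, 1]
  | 3 => [3, 1, 2]
  | _ => []

/-- Image of a letter in an even (1-based) position under ψ. -/
def evenBlock : ℕ → List ℕ
  | 1 => [3, 2, 1]
  | 2 => [1, 3, 2]
  | 3 => [2, 1, 3]
  | _ => []

/-- The Arshon map ψ: replace the letter at each odd (1-based) position by its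
`oddBlock`, and the letter at each even position by its `evenBlock`. -/
def psi (l : List ℕ) : List ℕ :=
  ((l.zipIdx.map Prod.swap).map fun p => if p.1 % 2 = 0 then oddBlock p.2 else evenBlock p.2).flatten

/-- The Arshon sequence `w = lim ψ^k(1)` as an infinite word: since
`|ψ^[n+1] [1]| = 3^(n+1) > n`, the `n`-th letter (0-based) is well defined. -/
def arshon (n : ℕ) : ℕ := (psi^[n + 1] [1]).getD n 0

/-- A word over the alphabet {1,2,3}. -/
def Word123 (l : List ℕ) : Prop := ∀ a ∈ l, a = 1 ∨ a = 2 ∨ a = 3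

/-- A morphism on finite words over {1,2,3}. -/
def IsMorphism123 (f : List ℕ → List ℕ) : Prop :=
  (∀ u v, f (u ++ v) = f u ++ f v) ∧ ∀ l, Word123 l → Word123 (f l)

/-- `f(w) = w` where `w` is the infinite Arshon word: the image of every finite
prefix of `w` is again a prefix of `w`, and these images have unbounded length
(so that `f(w)` is genuinely the infinite word `w`). -/
def FixesArshon (f : List ℕ → List ℕ) : Prop :=
  (∀ n, f ((List.range n).map arshon)
      = (List.range (f ((List.range n).map arshon)).length).map arshon) ∧
  Tendsto (fun n => (f ((List.range n).map arshon)).length) atTop atTop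

/-- The infinite word `s` is obtained by iterating the morphism `f` on the
letter 1: `f(1)` begins with 1, `|f^k(1)| → ∞`, and `s = lim f^k(1)`. -/
def IterLimit (f : List ℕ → List ℕ) (s : ℕ → ℕ) : Prop :=
  (∃ t, f [1] = 1 :: t) ∧
  Tendsto (fun k => (f^[k] [1]).length) atTop atTop ∧
  ∀ k n, n < (f^[k] [1]).length → (f^[k] [1]).getD n 0 = s n

def psiFrom : ℕ → List ℕ → List ℕ
  | _, [] => []
  | k, a :: l => (if k % 2 = 0 then oddBlock a else evenBlock a) ++ psiFrom (k+1) l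

lemma psiFrom_eq (k : ℕ) (l : List ℕ) :
    (((List.zipIdx l k).map Prod.swap).map fun p => if p.1 % 2 = 0 then oddBlock p.2 else evenBlock p.2).flatten
      = psiFrom k l := by
  induction l generalizing k with
  | nil => simp [psiFrom]
  | cons a l ih => simp [psiFrom, List.zipIdx_cons, ← ih]

lemma psi_eq (l : List ℕ) : psi l = psiFrom 0 l := by
  rw [psi, ← psiFrom_eq 0 l]

lemma word_psiFrom (k : ℕ) {l : List ℕ} (h : Word123 l) : Word123 (psiFrom k l) := by
  induction l generalizing k with
  | nil => intro a ha; simp [psiFrom] at ha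
  | cons b l ih =>
    intro a ha
    have hb := h b (by simp)
    have hl : Word123 l := fun x hx => h x (by simp [hx])
    simp only [psiFrom, List.mem_append] at ha
    rcases ha with ha | ha
    · rcases hb with rfl | rfl | rfl <;> rcases Nat.mod_two_eq_zero_or_one k with hk | hk <;>
        simp [hk, oddBlock, evenBlock] at ha <;> omega
    · exact ih (k+1) hl a ha

lemma length_psiFrom (k : ℕ) {l : List ℕ} (h : Word123 l) :
    (psiFrom k l).length = 3 * l.length := by
  induction l generalizing k with
  | nil => simp [psiFrom]
  | cons b l ih =>
    have hb := h b (by simp)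
    have hl : Word123 l := fun x hx => h x (by simp [hx])
    simp only [psiFrom, List.length_append, List.length_cons, ih (k+1) hl]
    rcases hb with rfl | rfl | rfl <;> rcases Nat.mod_two_eq_zero_or_one k with hk | hk <;>
      simp [hk, oddBlock, evenBlock] <;> ring

lemma prefix_psiFrom (k : ℕ) {u v : List ℕ} (h : u <+: v) :
    psiFrom k u <+: psiFrom k v := by
  induction u generalizing k v with
  | nil => simp [psiFrom]
  | cons a u ih =>
    obtain ⟨t, rfl⟩ := h
    show psiFrom k (a :: u) <+: psiFrom k (a :: (u ++ t))
    simp only [psiFrom]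
    obtain ⟨s, hs⟩ := ih (k+1) (⟨t, rfl⟩ : u <+: u ++ t)
    exact ⟨s, by rw [List.append_assoc, hs]⟩

lemma getD_psiFrom {l : List ℕ} (h : Word123 l) :
    ∀ k j i, j < l.length → i < 3 →
      (psiFrom k l).getD (3*j+i) 0
        = (if (k+j) % 2 = 0 then oddBlock (l.getD j 0) else evenBlock (l.getD j 0)).getD i 0 := by
  induction l with
  | nil => intro k j i hj; simp at hj
  | cons b l ih =>
    intro k j i hj hi
    have hb := h b (by simp)
    have hl : Word123 l := fun x hx => h x (by simp [hx])
    have hblen : ∀ m : ℕ, (if m % 2 = 0 then oddBlock b else evenBlock b).length = 3 := by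
      intro m
      rcases hb with rfl | rfl | rfl <;> rcases Nat.mod_two_eq_zero_or_one m with hk | hk <;>
        simp [hk, oddBlock, evenBlock]
    cases j with
    | zero =>
      simp only [psiFrom, Nat.mul_zero, Nat.zero_add, Nat.add_zero]
      rw [List.getD_append _ _ _ _ (by rw [hblen k]; omega)]
      simp [List.getD]
    | succ j =>
      have hidx : 3*(j+1)+i = (if k % 2 = 0 then oddBlock b else evenBlock b).length + (3*j+i) := by
        rw [hblen k]; ring
      simp only [psiFrom]
      rw [hidx, List.getD_append_right _ _ _ _ (Nat.le_add_right _ _), Nat.add_sub_cancel_left]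
      rw [ih hl (k+1) j i (by simpa using hj) hi]
      have : (k + 1 + j) = (k + (j+1)) := by ring
      rw [this]
      simp [List.getD]

lemma word_W (k : ℕ) : Word123 (psi^[k] [1]) := by
  induction k with
  | zero => intro a ha; simp at ha; omega
  | succ k ih =>
    rw [Function.iterate_succ_apply', psi_eq]
    exact word_psiFrom 0 ih

lemma length_W (k : ℕ) : (psi^[k] [1]).length = 3 ^ k := by
  induction k with
  | zero => simp
  | succ k ih =>
    rw [Function.iterate_succ_apply', psi_eq, length_psiFrom 0 (word_W k), ih, pow_succ]
    ring

lemma prefix_psi {u v : List ℕ} (h : u <+: v) : psi u <+: psi v := by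
  rw [psi_eq, psi_eq]; exact prefix_psiFrom 0 h

lemma prefix_W (k : ℕ) : psi^[k] [1] <+: psi^[k+1] [1] := by
  induction k with
  | zero => exact ⟨[2, 3], by simp [psi_eq, psiFrom, oddBlock]⟩
  | succ k ih =>
    have h2 := prefix_psi ih
    rwa [← Function.iterate_succ_apply' psi k, ← Function.iterate_succ_apply' psi (k+1)] at h2

lemma prefix_W_le {k m : ℕ} (h : k ≤ m) : psi^[k] [1] <+: psi^[m] [1] := by
  induction m with
  | zero => simp_all
  | succ m ih =>
    rcases Nat.lt_or_ge k (m+1) with hk | hk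
    · exact (ih (by omega)).trans (prefix_W m)
    · have : k = m + 1 := by omega
      subst this; rfl

lemma getD_prefix {u v : List ℕ} (h : u <+: v) {n : ℕ} (hn : n < u.length) :
    v.getD n 0 = u.getD n 0 := by
  obtain ⟨t, rfl⟩ := h
  rw [List.getD_append _ _ _ _ hn]

lemma arshon_eq (k n : ℕ) (h : n < 3 ^ k) : arshon n = (psi^[k] [1]).getD n 0 := by
  rcases Nat.le_total k (n+1) with hk | hk
  · rw [arshon, getD_prefix (prefix_W_le hk) (by rw [length_W]; exact h)]
  · rw [arshon]
    refine (getD_prefix (prefix_W_le hk) ?_).symm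
    rw [length_W]
    calc n < n + 1 := Nat.lt_succ_self n
    _ ≤ 3 ^ (n+1) := Nat.le_of_lt (Nat.lt_pow_self (by norm_num : 1 < 3))

lemma arshon_word (n : ℕ) : arshon n = 1 ∨ arshon n = 2 ∨ arshon n = 3 := by
  have hlen : n < (psi^[n+1] [1]).length := by
    rw [length_W]
    calc n < n + 1 := Nat.lt_succ_self n
    _ ≤ 3 ^ (n+1) := Nat.le_of_lt (Nat.lt_pow_self (by norm_num : 1 < 3))
  rw [arshon, List.getD_eq_getElem _ _ hlen]
  exact word_W (n+1) _ (List.getElem_mem hlen)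

lemma arshon_block (j i : ℕ) (hi : i < 3) :
    arshon (3*j+i)
      = (if j % 2 = 0 then oddBlock (arshon j) else evenBlock (arshon j)).getD i 0 := by
  have hj : j < 3 ^ (j+1) := by
    calc j < j + 1 := Nat.lt_succ_self j
    _ ≤ 3 ^ (j+1) := Nat.le_of_lt (Nat.lt_pow_self (by norm_num : 1 < 3))
  have h1 : 3*j+i < 3 ^ (j+2) := by
    have : 3 ^ (j+2) = 3 * 3 ^ (j+1) := by ring
    omega
  rw [arshon_eq (j+2) _ h1, Function.iterate_succ_apply', psi_eq,
    getD_psiFrom (word_W (j+1)) 0 j i (by rw [length_W]; exact hj) hi,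
    ← arshon_eq (j+1) j hj]
  simp

set_option maxRecDepth 10000 in
lemma occ1231 {p : ℕ} (h0 : arshon p = 1) (h1 : arshon (p+1) = 2)
    (h2 : arshon (p+2) = 3) (h3 : arshon (p+3) = 1) : p % 6 = 0 ∨ p % 6 = 5 := by
  obtain ⟨j, r, hr3, rfl⟩ : ∃ j r, r < 3 ∧ p = 3*j + r :=
    ⟨p/3, p%3, Nat.mod_lt _ (by norm_num), by omega⟩
  interval_cases r
  · -- r = 0 : the block at j is [1,2,3], forcing j even
    have e0 : arshon (3*j+0) = (if j % 2 = 0 then oddBlock (arshon j)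
        else evenBlock (arshon j)).getD 0 0 := arshon_block j 0 (by norm_num)
    have e1 : arshon (3*j+1) = (if j % 2 = 0 then oddBlock (arshon j)
        else evenBlock (arshon j)).getD 1 0 := arshon_block j 1 (by norm_num)
    have h1' : arshon (3*j+1) = 2 := by
      have h : 3*j+0+1 = 3*j+1 := by omega
      rwa [h] at h1
    rw [e0] at h0; rw [e1] at h1'
    rcases Nat.mod_two_eq_zero_or_one j with hj2 | hj2
    · left; omega
    · exfalso
      rcases arshon_word j with ha | ha | ha <;>
        simp [hj2, ha, oddBlock, evenBlock] at h0 h1'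
  · -- r = 1 : impossible
    exfalso
    have e1 : arshon (3*j+1) = (if j % 2 = 0 then oddBlock (arshon j)
        else evenBlock (arshon j)).getD 1 0 := arshon_block j 1 (by norm_num)
    have e2 : arshon (3*j+2) = (if j % 2 = 0 then oddBlock (arshon j)
        else evenBlock (arshon j)).getD 2 0 := arshon_block j 2 (by norm_num)
    have f0 : arshon (3*(j+1)+0) = (if (j+1) % 2 = 0 then oddBlock (arshon (j+1))
        else evenBlock (arshon (j+1))).getD 0 0 := arshon_block (j+1) 0 (by norm_num)
    have f1 : arshon (3*(j+1)+1) = (if (j+1) % 2 = 0 then oddBlock (arshon (j+1))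
        else evenBlock (arshon (j+1))).getD 1 0 := arshon_block (j+1) 1 (by norm_num)
    have h0' : arshon (3*j+1) = 1 := h0
    have h1' : arshon (3*j+2) = 2 := by
      have h : 3*j+1+1 = 3*j+2 := by omega
      rwa [h] at h1
    have h2' : arshon (3*(j+1)+0) = 3 := by
      have h : 3*j+1+2 = 3*(j+1)+0 := by omega
      rwa [h] at h2
    have h3' : arshon (3*(j+1)+1) = 1 := by
      have h : 3*j+1+3 = 3*(j+1)+1 := by omega
      rwa [h] at h3
    rw [e1] at h0'; rw [e2] at h1'; rw [f0] at h2'; rw [f1] at h3'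
    rcases Nat.mod_two_eq_zero_or_one j with hj2 | hj2
    · have hj1 : (j+1) % 2 = 1 := by omega
      rcases arshon_word j with ha | ha | ha <;>
        rcases arshon_word (j+1) with hb | hb | hb <;>
        simp [hj2, hj1, ha, hb, oddBlock, evenBlock] at h0' h1' h2' h3'
    · have hj1 : (j+1) % 2 = 0 := by omega
      rcases arshon_word j with ha | ha | ha <;>
        rcases arshon_word (j+1) with hb | hb | hb <;>
        simp [hj2, hj1, ha, hb, oddBlock, evenBlock] at h0' h1' h2' h3'
  · -- r = 2 : the block at j+1 is [2,3,1], forcing j odd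
    have f0 : arshon (3*(j+1)+0) = (if (j+1) % 2 = 0 then oddBlock (arshon (j+1))
        else evenBlock (arshon (j+1))).getD 0 0 := arshon_block (j+1) 0 (by norm_num)
    have f1 : arshon (3*(j+1)+1) = (if (j+1) % 2 = 0 then oddBlock (arshon (j+1))
        else evenBlock (arshon (j+1))).getD 1 0 := arshon_block (j+1) 1 (by norm_num)
    have h1' : arshon (3*(j+1)+0) = 2 := by
      have h : 3*j+2+1 = 3*(j+1)+0 := by omega
      rwa [h] at h1
    have h2' : arshon (3*(j+1)+1) = 3 := by
      have h : 3*j+2+2 = 3*(j+1)+1 := by omega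
      rwa [h] at h2
    rw [f0] at h1'; rw [f1] at h2'
    rcases Nat.mod_two_eq_zero_or_one j with hj2 | hj2
    · exfalso
      have hj1 : (j+1) % 2 = 1 := by omega
      rcases arshon_word (j+1) with hb | hb | hb <;>
        simp [hj1, hb, oddBlock, evenBlock] at h1' h2'
    · right; omega

lemma arshon_lt27 (n : ℕ) (h : n < 27) : arshon n = (psi^[3] [1]).getD n 0 :=
  arshon_eq 3 n (by rw [show (3:ℕ)^3 = 27 by norm_num]; exact h)

lemma a0 : arshon 0 = 1 := by rw [arshon_lt27 0 (by norm_num)]; simp [Function.iterate_succ, psi_eq, psiFrom, oddBlock, evenBlock]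
lemma a1 : arshon 1 = 2 := by rw [arshon_lt27 1 (by norm_num)]; simp [Function.iterate_succ, psi_eq, psiFrom, oddBlock, evenBlock]
lemma a2 : arshon 2 = 3 := by rw [arshon_lt27 2 (by norm_num)]; simp [Function.iterate_succ, psi_eq, psiFrom, oddBlock, evenBlock]
lemma a3 : arshon 3 = 1 := by rw [arshon_lt27 3 (by norm_num)]; simp [Function.iterate_succ, psi_eq, psiFrom, oddBlock, evenBlock]
lemma a4 : arshon 4 = 3 := by rw [arshon_lt27 4 (by norm_num)]; simp [Function.iterate_succ, psi_eq, psiFrom, oddBlock, evenBlock]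
lemma a5 : arshon 5 = 2 := by rw [arshon_lt27 5 (by norm_num)]; simp [Function.iterate_succ, psi_eq, psiFrom, oddBlock, evenBlock]
lemma a6 : arshon 6 = 3 := by rw [arshon_lt27 6 (by norm_num)]; simp [Function.iterate_succ, psi_eq, psiFrom, oddBlock, evenBlock]
lemma a7 : arshon 7 = 1 := by rw [arshon_lt27 7 (by norm_num)]; simp [Function.iterate_succ, psi_eq, psiFrom, oddBlock, evenBlock]
lemma a8 : arshon 8 = 2 := by rw [arshon_lt27 8 (by norm_num)]; simp [Function.iterate_succ, psi_eq, psiFrom, oddBlock, evenBlock]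
lemma a9 : arshon 9 = 3 := by rw [arshon_lt27 9 (by norm_num)]; simp [Function.iterate_succ, psi_eq, psiFrom, oddBlock, evenBlock]
lemma a10 : arshon 10 = 2 := by rw [arshon_lt27 10 (by norm_num)]; simp [Function.iterate_succ, psi_eq, psiFrom, oddBlock, evenBlock]
lemma a11 : arshon 11 = 1 := by rw [arshon_lt27 11 (by norm_num)]; simp [Function.iterate_succ, psi_eq, psiFrom, oddBlock, evenBlock]

lemma getD_map_range (m t : ℕ) (ht : t < m) :
    ((List.range m).map arshon).getD t 0 = arshon t := by
  rw [List.getD_eq_getElem _ _ (by simpa using ht)]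
  simp

/-- There is no morphism `f` with `f(w) = w`, `|f(1)|+|f(2)|+|f(3)| > 3`
and `|f(1)| = 4`. -/
theorem arshon_no_fixing_morphism_length_eq_4 :
    ¬ ∃ f : List ℕ → List ℕ, IsMorphism123 f ∧ FixesArshon f ∧
      (f [1]).length + (f [2]).length + (f [3]).length > 3 ∧
      (f [1]).length = 4 := by
  rintro ⟨f, ⟨hcat, -⟩, ⟨hfix, -⟩, -, h4⟩
  have hnil : f [] = [] := by
    have h := hcat [] []
    rw [List.nil_append] at h
    have hl := congrArg List.length h
    simp only [List.length_append] at hl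
    exact List.length_eq_zero_iff.mp (by omega)
  set L : ℕ → ℕ := fun n => (f ((List.range n).map arshon)).length with hLdef
  have hstep : ∀ n, f ((List.range (n+1)).map arshon)
      = f ((List.range n).map arshon) ++ f [arshon n] := by
    intro n
    rw [List.range_succ, List.map_append, hcat]
    simp
  have hLstep : ∀ n, L (n+1) = L n + (f [arshon n]).length := by
    intro n
    simp only [hLdef]
    rw [hstep]
    simp
  have hf1 : f [1] = [1, 2, 3, 1] := by
    have h := hfix 1
    have hP1 : (List.range 1).map arshon = [1] := by
      rw [show List.range 1 = [0] from rfl]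
      simp [a0]
    rw [hP1, h4] at h
    rw [h]
    have h4' : List.range 4 = [0, 1, 2, 3] := by decide
    rw [h4']
    simp [a0, a1, a2, a3]
  have key : ∀ n, arshon n = 1 → L n % 6 = 0 ∨ L n % 6 = 5 := by
    intro n h1
    have e1 := hfix n
    have e2 := hfix (n+1)
    rw [hstep n, h1, hf1, e1] at e2
    have hlen : ((List.range (L n)).map arshon ++ [1, 2, 3, 1]).length = L n + 4 := by
      simp
    rw [hlen] at e2
    have herr : ∀ i, i < 4 → arshon (L n + i) = [1, 2, 3, 1].getD i 0 := by
      intro i hi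
      have step1 : arshon (L n + i)
          = ((List.range (L n + 4)).map arshon).getD (L n + i) 0 :=
        (getD_map_range _ _ (by omega)).symm
      rw [step1, ← e2, List.getD_append_right _ _ _ _ (by simp [hLdef])]
      congr 1
      simp [hLdef]
    have q0 : arshon (L n) = 1 := by
      have := herr 0 (by norm_num); simpa using this
    have q1 : arshon (L n + 1) = 2 := by
      have := herr 1 (by norm_num); simpa using this
    have q2 : arshon (L n + 2) = 3 := by
      have := herr 2 (by norm_num); simpa using this
    have q3 : arshon (L n + 3) = 1 := by
      have := herr 3 (by norm_num); simpa using this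
    exact occ1231 q0 q1 q2 q3
  set b := (f [2]).length with hb
  set c := (f [3]).length with hc
  have L0 : L 0 = 0 := by simp [hLdef, hnil]
  have L1 : L 1 = 4 := by rw [hLstep 0, a0, h4, L0]
  have L2 : L 2 = 4 + b := by rw [hLstep 1, a1, L1]
  have L3 : L 3 = 4 + b + c := by rw [hLstep 2, a2, L2]
  have L4 : L 4 = 8 + b + c := by rw [hLstep 3, a3, h4, L3]; ring
  have L5 : L 5 = 8 + b + 2*c := by rw [hLstep 4, a4, L4]; ring
  have L6 : L 6 = 8 + 2*b + 2*c := by rw [hLstep 5, a5, L5]; ring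
  have L7 : L 7 = 8 + 2*b + 3*c := by rw [hLstep 6, a6, L6]; ring
  have L8 : L 8 = 12 + 2*b + 3*c := by rw [hLstep 7, a7, h4, L7]; ring
  have L9 : L 9 = 12 + 3*b + 3*c := by rw [hLstep 8, a8, L8]; ring
  have L10 : L 10 = 12 + 3*b + 4*c := by rw [hLstep 9, a9, L9]; ring
  have L11 : L 11 = 12 + 4*b + 4*c := by rw [hLstep 10, a10, L10]; ring
  have k3 := key 3 a3
  have k7 := key 7 a7
  have k11 := key 11 a11
  rw [L3] at k3
  rw [L7] at k7
  rw [L11] at k11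
  omega
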